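/- Define w : ℕ × ℕ → Bool by: w(0,0) = false, and for (a,b) ≠ (0,0), w(a,b) = true iff some legal move leads to a position (a',b') with w(a',b') = false. Let φ = (1+√5)/2. Then for all non-negative integers k ≤ n with (k,n) ≠ (0,0): w(k,n) = true if and only if NOT (n/φ < k and n < φ·k), i.e. w(k,n) = false iff k/φ < n < φ·k. -/

import Mathlib

noncomputable def phi : ℝ := (1 + Real.sqrt 5) / 2

/-- A legal move in the two-heaps game: from `p = (a, b)` one removes a positive
number of tokens that is a (positive) multiple of `a` or of `b` from one of the heaps. -/
def Move (p q : ℕ × ℕ) : Prop :=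
  ∃ m : ℕ, 0 < m ∧
    ((0 < m * p.1 ∧ m * p.1 ≤ p.1 ∧ q = (p.1 - m * p.1, p.2)) ∨
     (0 < m * p.1 ∧ m * p.1 ≤ p.2 ∧ q = (p.1, p.2 - m * p.1)) ∨
     (0 < m * p.2 ∧ m * p.2 ≤ p.1 ∧ q = (p.1 - m * p.2, p.2)) ∨
     (0 < m * p.2 ∧ m * p.2 ≤ p.2 ∧ q = (p.1, p.2 - m * p.2)))

theorem Move.sum_lt {p q : ℕ × ℕ} (h : Move p q) : q.1 + q.2 < p.1 + p.2 := by
  obtain ⟨m, hm, h⟩ := h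
  rcases h with ⟨h1, h2, rfl⟩ | ⟨h1, h2, rfl⟩ | ⟨h1, h2, rfl⟩ | ⟨h1, h2, rfl⟩ <;> dsimp only <;> omega

/-- `Win p` holds iff the player to move from `p` wins: there is a legal move to a
position from which the player to move loses.  In particular `Win (0,0)` is false. -/
def Win (p : ℕ × ℕ) : Prop :=
  ∃ q, ∃ _ : Move p q, ¬ Win q
termination_by p.1 + p.2
decreasing_by exact Move.sum_lt ‹Move _ _›

lemma one_lt_phi : 1 < phi := Real.one_lt_goldenRatio
lemma phi_pos : 0 < phi := lt_trans one_pos one_lt_phi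
lemma phi_ne : phi ≠ 0 := phi_pos.ne'
lemma phi_sq : phi * phi = phi + 1 := by
  have := Real.goldenRatio_sq
  show Real.goldenRatio * Real.goldenRatio = Real.goldenRatio + 1
  nlinarith [this]
lemma irr_phi : Irrational phi := Real.goldenRatio_irrational

lemma floor_strict (a : ℕ) (ha : 0 < a) : phi * (⌊(a:ℝ)/phi⌋₊ : ℝ) < a := by
  set t := ⌊(a:ℝ)/phi⌋₊ with ht
  have h1 : (t : ℝ) ≤ (a:ℝ)/phi := Nat.floor_le (div_nonneg (Nat.cast_nonneg a) phi_pos.le)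
  have h2 : phi * (t : ℝ) ≤ a := by
    have := mul_le_mul_of_nonneg_left h1 phi_pos.le
    calc phi * (t:ℝ) ≤ phi * ((a:ℝ)/phi) := this
    _ = a := mul_div_cancel₀ _ phi_ne
  rcases h2.lt_or_eq with h | h
  · exact h
  · exfalso
    rcases Nat.eq_zero_or_pos t with h3 | h3
    · rw [h3] at h
      have : (a:ℝ) = 0 := by push_cast at h; linarith
      exact_mod_cast ha.ne' (by exact_mod_cast this)
    · have hne : ((t:ℕ):ℝ) * phi ≠ ((a:ℤ) : ℝ) := (irr_phi.natCast_mul h3.ne').ne_int a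
      exact hne (by push_cast; linarith)

lemma floor_lt' (a : ℕ) : (a:ℝ) < phi * ((⌊(a:ℝ)/phi⌋₊ : ℝ) + 1) := by
  have ha : (0:ℝ) ≤ (a:ℝ)/phi := div_nonneg (Nat.cast_nonneg a) phi_pos.le
  have h := Nat.lt_floor_add_one ((a:ℝ)/phi)
  have h2 := mul_lt_mul_of_pos_left h phi_pos
  have h3 : phi * ((a:ℝ)/phi) = a := mul_div_cancel₀ _ phi_ne
  linarith
lemma key (a b : ℕ) (ha : 0 < a) (hb : phi * a ≤ b) :
    ∃ m c : ℕ, 0 < m ∧ b = c + m * a ∧ 0 < c ∧ (a:ℝ) < phi * c ∧ (c:ℝ) < phi * a := by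
  set t := ⌊(a:ℝ)/phi⌋₊ with ht
  have hs := floor_strict a ha
  have hl := floor_lt' a
  have htpos : (0:ℝ) ≤ (t:ℝ) := Nat.cast_nonneg t
  have hta : (t:ℝ) + a < phi * a := by nlinarith [phi_sq, phi_pos, one_lt_phi]
  have haR : (0:ℝ) < a := by exact_mod_cast ha
  have haphi : (a:ℝ) < phi * a := by nlinarith [one_lt_phi]
  have htb : t + 1 ≤ b := by
    have h1 : (t:ℝ) < b := by nlinarith [one_lt_phi]
    exact_mod_cast h1
  set s := (b - (t+1)) % a with hsdef
  set m := (b - (t+1)) / a with hmdef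
  have hdm : s + m * a = b - (t+1) := by
    rw [hsdef, hmdef, Nat.mod_add_div']
  have hsa : s < a := Nat.mod_lt _ ha
  have hbeq : b = (t + 1 + s) + m * a := by omega
  have hsR : (s:ℝ) + 1 ≤ a := by exact_mod_cast hsa
  have hcR : ((t + 1 + s : ℕ) : ℝ) = (t:ℝ) + 1 + s := by push_cast; ring
  have hcphi : ((t + 1 + s : ℕ) : ℝ) < phi * a := by rw [hcR]; nlinarith [hta]
  have haphic : (a:ℝ) < phi * ((t + 1 + s : ℕ) : ℝ) := by
    rw [hcR]
    calc (a:ℝ) < phi * ((t:ℝ) + 1) := hl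
    _ ≤ _ := by nlinarith [phi_pos, (Nat.cast_nonneg s : (0:ℝ) ≤ s)]
  refine ⟨m, t + 1 + s, ?_, hbeq, by omega, haphic, hcphi⟩
  rcases Nat.eq_zero_or_pos m with hm | hm
  · exfalso
    rw [hm] at hbeq
    have : (b:ℝ) = ((t + 1 + s : ℕ) : ℝ) := by rw [hbeq]; push_cast; ring
    linarith [hcphi, hb, this ▸ hb]
  · exact hm

def P (p : ℕ × ℕ) : Prop :=
  p = (0,0) ∨ (0 < p.1 ∧ 0 < p.2 ∧ (p.1:ℝ) < phi * p.2 ∧ (p.2:ℝ) < phi * p.1)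

lemma win_iff (p : ℕ × ℕ) : Win p ↔ ∃ q, Move p q ∧ ¬ Win q := by
  rw [Win]; simp only [exists_prop]

lemma not_win_00 : ¬ Win (0,0) := by
  rw [win_iff]
  rintro ⟨q, ⟨m, hm, H⟩, -⟩
  rcases H with ⟨h1, -, -⟩ | ⟨h1, -, -⟩ | ⟨h1, -, -⟩ | ⟨h1, -, -⟩ <;> simp at h1

lemma main_ind : ∀ N : ℕ, ∀ p : ℕ × ℕ, p.1 + p.2 ≤ N → (Win p ↔ ¬ P p) := by
  intro N
  induction N with
  | zero =>
    rintro ⟨a, b⟩ hp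
    have ha : a = 0 := by omega
    have hb : b = 0 := by omega
    subst ha; subst hb
    constructor
    · intro hw; exact absurd hw not_win_00
    · intro h; exact absurd (Or.inl rfl : P (0,0)) h
  | succ N IH =>
    rintro ⟨a, b⟩ hp
    constructor
    · -- Win → ¬ P
      intro hw hP
      rw [win_iff] at hw
      obtain ⟨q, hmv, hq⟩ := hw
      apply hq
      have hqsum : q.1 + q.2 ≤ N := by
        have := Move.sum_lt hmv
        simp only at this; omega
      rw [IH q hqsum]
      -- show ¬ P q
      rcases hP with h00 | ⟨ha, hb, hab, hba⟩
      · -- p = (0,0): no move possible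
        exfalso
        rw [h00] at hmv
        obtain ⟨m, hm, H⟩ := hmv
        rcases H with ⟨h1, -, -⟩ | ⟨h1, -, -⟩ | ⟨h1, -, -⟩ | ⟨h1, -, -⟩ <;> simp at h1
      · obtain ⟨m, hm, H⟩ := hmv
        simp only at H ha hb hab hba
        rcases H with ⟨h1, h2, rfl⟩ | ⟨h1, h2, rfl⟩ | ⟨h1, h2, rfl⟩ | ⟨h1, h2, rfl⟩
        · -- q = (a - m*a, b) = (0, b)
          have : a - m * a = 0 := by
            have hle : a ≤ m * a := Nat.le_mul_of_pos_left a hm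
            omega
          rintro (hq0 | ⟨hq1, -, -, -⟩)
          · simp [this] at hq0; omega
          · simp [this] at hq1
        · -- q = (a, b - m*a)
          rintro (hq0 | ⟨-, -, hq3, -⟩)
          · simp at hq0; omega
          · simp only at hq3
            have hcast : ((b - m * a : ℕ) : ℝ) = (b:ℝ) - (m:ℝ) * a := by
              push_cast [h2]; ring
            rw [hcast] at hq3
            have hma : (a:ℝ) ≤ (m:ℝ) * a := by
              have h1 : (1:ℝ) ≤ m := by exact_mod_cast hm
              nlinarith [(Nat.cast_nonneg a : (0:ℝ) ≤ a)]
            have haR : (0:ℝ) < a := by exact_mod_cast ha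
            nlinarith [phi_sq, phi_pos]
        · -- q = (a - m*b, b)
          rintro (hq0 | ⟨-, -, -, hq4⟩)
          · simp at hq0; omega
          · simp only at hq4
            have hcast : ((a - m * b : ℕ) : ℝ) = (a:ℝ) - (m:ℝ) * b := by
              push_cast [h2]; ring
            rw [hcast] at hq4
            have hmb : (b:ℝ) ≤ (m:ℝ) * b := by
              have h1 : (1:ℝ) ≤ m := by exact_mod_cast hm
              nlinarith [(Nat.cast_nonneg b : (0:ℝ) ≤ b)]
            have hbR : (0:ℝ) < b := by exact_mod_cast hb
            nlinarith [phi_sq, phi_pos]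
        · -- q = (a, b - m*b) = (a, 0)
          have : b - m * b = 0 := by
            have hle : b ≤ m * b := Nat.le_mul_of_pos_left b hm
            omega
          rintro (hq0 | ⟨-, hq2, -, -⟩)
          · simp [this] at hq0; omega
          · simp [this] at hq2
    · -- ¬ P → Win
      intro hnp
      rw [win_iff]
      have hne : (a, b) ≠ (0, 0) := fun h => hnp (Or.inl h)
      rcases Nat.eq_zero_or_pos a with ha | ha
      · subst ha
        have hb : 0 < b := by
          rcases Nat.eq_zero_or_pos b with h | h
          · exact absurd (by rw [h]) hne
          · exact h
        refine ⟨(0,0), ⟨1, one_pos, Or.inr (Or.inr (Or.inr ⟨by simpa, by simp, by simp⟩))⟩, not_win_00⟩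
      rcases Nat.eq_zero_or_pos b with hb | hb
      · subst hb
        refine ⟨(0,0), ⟨1, one_pos, Or.inl ⟨by simpa, by simp, by simp⟩⟩, not_win_00⟩
      -- both positive
      have hd : phi * (b:ℝ) ≤ a ∨ phi * (a:ℝ) ≤ b := by
        by_contra h
        push_neg at h
        exact hnp (Or.inr ⟨ha, hb, h.1, h.2⟩)
      rcases hd with hd | hd
      · -- subtract multiple of b from a
        obtain ⟨m, c, hm, heq, hc, h1, h2⟩ := key b a hb hd
        refine ⟨(c, b), ⟨m, hm, Or.inr (Or.inr (Or.inl ⟨by positivity, by simp; omega, by simp; omega⟩))⟩, ?_⟩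
        intro hw
        have hsum : c + b ≤ N := by
          have : 0 < m * b := by positivity
          omega
        exact ((IH (c, b) (by simpa using hsum)).mp hw) (Or.inr ⟨hc, hb, h2, h1⟩)
      · obtain ⟨m, c, hm, heq, hc, h1, h2⟩ := key a b ha hd
        refine ⟨(a, c), ⟨m, hm, Or.inr (Or.inl ⟨by positivity, by simp; omega, by simp; omega⟩)⟩, ?_⟩
        intro hw
        have hsum : a + c ≤ N := by
          have : 0 < m * a := by positivity
          omega
        exact ((IH (a, c) (by simpa using hsum)).mp hw) (Or.inr ⟨ha, hc, h1, h2⟩)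

theorem win_iff_not_golden_zone (k n : ℕ) (hkn : k ≤ n) (hne : (k, n) ≠ (0, 0)) :
    Win (k, n) ↔ ¬ ((n : ℝ) / phi < (k : ℝ) ∧ (n : ℝ) < phi * k) := by
  rw [main_ind (k + n) (k, n) le_rfl]
  apply not_congr
  simp only [P]
  constructor
  · rintro (h | ⟨-, -, -, hnk⟩)
    · exact absurd h hne
    · exact ⟨by rw [div_lt_iff₀ phi_pos]; nlinarith, hnk⟩
  · rintro ⟨h1, h2⟩
    have hk : 0 < k := by
      by_contra h
      push_neg at h
      interval_cases k
      have : (0:ℝ) ≤ (n:ℝ) / phi := div_nonneg (Nat.cast_nonneg n) phi_pos.le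
      simp at h1; linarith
    have hn : 0 < n := lt_of_lt_of_le hk hkn
    refine Or.inr ⟨hk, hn, ?_, h2⟩
    have hknR : (k:ℝ) ≤ n := by exact_mod_cast hkn
    have hnR : (0:ℝ) < n := by exact_mod_cast hn
    nlinarith [one_lt_phi]
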